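/- Assume 0 < μ < 1/L_f and 0 < β < 2. Consider the inexact gradient descent iterates: given x⁰, z⁰ ∈ ℝⁿ, for each k ≥ 0 let x^{k+1} be the unique minimizer of x ↦ ⟨∇f(x^k), x⟩ + h(x) + ‖x − z^k‖²/(2μ), let x_{μg}(z^k) be the proximal point of g at z^k, and set z^{k+1} = z^k + β(x^{k+1} − x_{μg}(z^k)). Define the potential ℱ(x, z) = f(x) + h(x) + ‖x − z‖²/(2μ) − M_{μg}(z), and the constants c₁ = (μ^{-1} − L_f)/2 > 0 and c₂ = (1/β − 1/2)/μ > 0. Then for all k ≥ 0: ℱ(x^k, z^k) ≥ F_μ(z^k) ≥ F*, and ℱ(x^k, z^k) − ℱ(x^{k+1}, z^{k+1}) ≥ c₁‖x^{k+1} − x^k‖² + c₂‖z^{k+1} − z^k‖². -/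

import Mathlib

open scoped RealInnerProductSpace

noncomputable section

/-- `ℝⁿ` with the Euclidean norm. -/
abbrev En (n : ℕ) := EuclideanSpace ℝ (Fin n)

/-- `h` is proper: finite somewhere and never `⊥`. -/
def ProperE {n : ℕ} (h : En n → EReal) : Prop :=
  (∃ x, h x ≠ ⊤) ∧ ∀ x, h x ≠ ⊥

/-- Convexity of an extended-real-valued function. -/
def ConvexE {n : ℕ} (h : En n → EReal) : Prop :=
  ∀ x y : En n, ∀ a b : ℝ, 0 ≤ a → 0 ≤ b → a + b = 1 →
    h (a • x + b • y) ≤ (a : EReal) * h x + (b : EReal) * h y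

/-- `Mφ` is the Moreau envelope of `φ` with parameter `μ` and `xφ` the associated
(unique) proximal mapping. -/
def IsMoreau {n : ℕ} (φ : En n → EReal) (μ : ℝ) (Mφ : En n → ℝ) (xφ : En n → En n) : Prop :=
  ∀ z : En n,
    (Mφ z : EReal) = φ (xφ z) + ((‖xφ z - z‖ ^ 2 / (2 * μ) : ℝ) : EReal) ∧
    (∀ x, (Mφ z : EReal) ≤ φ x + ((‖x - z‖ ^ 2 / (2 * μ) : ℝ) : EReal)) ∧
    (∀ x, φ x + ((‖x - z‖ ^ 2 / (2 * μ) : ℝ) : EReal) = (Mφ z : EReal) → x = xφ z)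

/-- Real-valued version, for the convex function `g`. -/
def IsMoreauR {n : ℕ} (g : En n → ℝ) (μ : ℝ) (Mg : En n → ℝ) (xg : En n → En n) : Prop :=
  ∀ z : En n,
    Mg z = g (xg z) + ‖xg z - z‖ ^ 2 / (2 * μ) ∧
    (∀ x, Mg z ≤ g x + ‖x - z‖ ^ 2 / (2 * μ)) ∧
    (∀ x, g x + ‖x - z‖ ^ 2 / (2 * μ) = Mg z → x = xg z)

/-- `ξ ∈ ∂g(x)` for a (finite-valued) convex function `g`. -/
def ConvexSubgradAt {n : ℕ} (g : En n → ℝ) (ξ x : En n) : Prop :=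
  ∀ y, g x + ⟪ξ, y - x⟫ ≤ g y

/-- `ξ ∈ ∂h(x)` for a proper convex extended-real-valued `h`. -/
def ESubgradAt {n : ℕ} (h : En n → EReal) (ξ x : En n) : Prop :=
  ∀ y, h x + ((⟪ξ, y - x⟫ : ℝ) : EReal) ≤ h y

/-- The potential function `ℱ(x,z) = f(x) + h(x) + ‖x−z‖²/(2μ) − M_{μg}(z)`. -/
def potF {n : ℕ} (f : En n → ℝ) (h : En n → EReal) (Mg : En n → ℝ) (μ : ℝ)
    (x z : En n) : EReal :=
  h x + ((f x + ‖x - z‖ ^ 2 / (2 * μ) - Mg z : ℝ) : EReal)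

/-! ### Auxiliary lemmas -/


/-- Descent lemma for functions with Lipschitz gradient. -/
lemma descent_lemma' {n : ℕ} (f : En n → ℝ) (f' : En n → En n) (Lf : ℝ)
    (hfdiff : ∀ x, HasGradientAt f (f' x) x)
    (hfLip : ∀ x y : En n, ‖f' x - f' y‖ ≤ Lf * ‖x - y‖) (x y : En n) :
    f y ≤ f x + ⟪f' x, y - x⟫ + Lf / 2 * ‖y - x‖ ^ 2 := by
  set d := y - x with hd
  have hcurve : ∀ t : ℝ, HasDerivAt (fun t : ℝ => x + t • d) d t := by
    intro t
    simpa using ((hasDerivAt_id t).smul_const d).const_add x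
  set G : ℝ → ℝ := fun t => f (x + t • d) - t * ⟪f' x, d⟫ - Lf / 2 * t ^ 2 * ‖d‖ ^ 2 with hG
  have hG' : ∀ t ∈ Set.Icc (0:ℝ) 1, HasDerivAt G
      (⟪f' (x + t • d), d⟫ - ⟪f' x, d⟫ - Lf * t * ‖d‖ ^ 2) t := by
    intro t _
    have h1 : HasDerivAt (fun t : ℝ => f (x + t • d)) ⟪f' (x + t • d), d⟫ t := by
      have := ((hfdiff (x + t • d)).hasFDerivAt).comp_hasDerivAt t (hcurve t)
      simp at this; exact this
    have h2 : HasDerivAt (fun t : ℝ => t * ⟪f' x, d⟫) ⟪f' x, d⟫ t := by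
      simpa using (hasDerivAt_id t).mul_const ⟪f' x, d⟫
    have h3 : HasDerivAt (fun t : ℝ => Lf / 2 * t ^ 2 * ‖d‖ ^ 2) (Lf * t * ‖d‖ ^ 2) t := by
      have hp : HasDerivAt (fun t : ℝ => t ^ 2) (2 * t) t := by
        simpa using hasDerivAt_pow 2 t
      have := (hp.const_mul (Lf / 2)).mul_const (‖d‖ ^ 2)
      exact this.congr_deriv (by ring)
    exact (h1.sub h2).sub h3
  have hmono : G 1 ≤ G 0 := by
    have : AntitoneOn G (Set.Icc 0 1) := by
      apply antitoneOn_of_deriv_nonpos (convex_Icc 0 1)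
      · exact fun t ht => (hG' t ht).continuousAt.continuousWithinAt
      · intro t ht
        rw [interior_Icc] at ht
        exact ((hG' t ⟨le_of_lt ht.1, le_of_lt ht.2⟩).differentiableAt).differentiableWithinAt
      · intro t ht
        rw [interior_Icc] at ht
        rw [(hG' t ⟨le_of_lt ht.1, le_of_lt ht.2⟩).deriv]
        have hb : ⟪f' (x + t • d) - f' x, d⟫ ≤ Lf * t * ‖d‖ ^ 2 := by
          calc ⟪f' (x + t • d) - f' x, d⟫ ≤ ‖f' (x + t • d) - f' x‖ * ‖d‖ :=
                real_inner_le_norm _ _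
            _ ≤ (Lf * ‖(x + t • d) - x‖) * ‖d‖ := by
                gcongr; exact hfLip _ _
            _ = Lf * (t * ‖d‖) * ‖d‖ := by
                rw [show (x + t • d) - x = t • d by abel, norm_smul]
                simp [abs_of_nonneg (le_of_lt ht.1)]
            _ = Lf * t * ‖d‖ ^ 2 := by ring
        rw [inner_sub_left] at hb
        linarith
    exact this (by norm_num) (by norm_num) (by norm_num)
  have hfin : f (x + (1:ℝ) • d) - ⟪f' x, d⟫ - Lf / 2 * ‖d‖ ^ 2 ≤ f (x + (0:ℝ) • d) := by
    have h0 : G 0 = f (x + (0:ℝ) • d) := by simp [hG]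
    have h1 : G 1 = f (x + (1:ℝ) • d) - ⟪f' x, d⟫ - Lf / 2 * ‖d‖ ^ 2 := by simp [hG]
    linarith [h0 ▸ h1 ▸ hmono]
  simp only [one_smul, zero_smul, add_zero] at hfin
  have hxy : x + d = y := by simp [hd]
  rw [hxy] at hfin
  linarith

lemma le_of_small' {A B C : ℝ} (hC : 0 ≤ C) (H : ∀ t : ℝ, 0 < t → t ≤ 1 → A ≤ B + t * C) :
    A ≤ B := by
  refine le_of_forall_pos_le_add fun ε hε => ?_
  rcases eq_or_lt_of_le hC with h0 | h0
  · have := H 1 one_pos le_rfl; rw [← h0] at this; linarith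
  · have ht : 0 < min 1 (ε / C) := lt_min one_pos (div_pos hε h0)
    have h1 := H _ ht (min_le_left _ _)
    have h2 : min 1 (ε / C) * C ≤ ε := by
      calc min 1 (ε / C) * C ≤ (ε / C) * C :=
            mul_le_mul_of_nonneg_right (min_le_right _ _) hC
        _ = ε := div_mul_cancel₀ _ (ne_of_gt h0)
    linarith

/-- Three-point inequality for the proximal step of a convex real function. -/
lemma threepoint_g {n : ℕ} (g : En n → ℝ) (hg : ConvexOn ℝ Set.univ g) (μ : ℝ) (hμ : 0 < μ)
    (z xb : En n) (Mgz : ℝ) (h1 : Mgz = g xb + ‖xb - z‖ ^ 2 / (2 * μ))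
    (h2 : ∀ w, Mgz ≤ g w + ‖w - z‖ ^ 2 / (2 * μ)) (w : En n) :
    Mgz + ‖w - xb‖ ^ 2 / (2 * μ) ≤ g w + ‖w - z‖ ^ 2 / (2 * μ) := by
  set I : ℝ := ⟪xb - z, w - xb⟫ with hI
  set N : ℝ := ‖w - xb‖ ^ 2 with hN
  have key : g xb ≤ g w + 2 * I / (2 * μ) := by
    apply le_of_small' (C := N / (2 * μ)) (by positivity)
    intro t ht0 ht1
    have hcvx : g ((1 - t) • xb + t • w) ≤ (1 - t) * g xb + t * g w :=
      hg.2 (Set.mem_univ xb) (Set.mem_univ w) (by linarith) (le_of_lt ht0) (by ring)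
    have hmin := h2 ((1 - t) • xb + t • w)
    have hexp : ‖((1 - t) • xb + t • w) - z‖ ^ 2 = ‖xb - z‖ ^ 2 + 2 * t * I + t ^ 2 * N := by
      have e : ((1 - t) • xb + t • w) - z = (xb - z) + t • (w - xb) := by
        rw [sub_smul, one_smul, smul_sub]; abel
      rw [e, @norm_add_sq_real, real_inner_smul_right, norm_smul]
      simp [abs_of_nonneg (le_of_lt ht0), hI, hN]; ring
    rw [h1, hexp] at hmin
    have step : t * g xb ≤ t * (g w + 2 * I / (2 * μ) + t * (N / (2 * μ))) := by
      have expand : (‖xb - z‖ ^ 2 + 2 * t * I + t ^ 2 * N) / (2 * μ)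
          = ‖xb - z‖ ^ 2 / (2 * μ) + t * (2 * I / (2 * μ)) + t * (t * (N / (2 * μ))) := by ring
      have expand2 : t * (g w + 2 * I / (2 * μ) + t * (N / (2 * μ)))
          = t * g w + t * (2 * I / (2 * μ)) + t * (t * (N / (2 * μ))) := by ring
      rw [expand] at hmin
      linarith [hcvx, hmin]
    have := (mul_le_mul_iff_right₀ ht0).mp step
    linarith
  have hexp2 : ‖w - z‖ ^ 2 = ‖xb - z‖ ^ 2 + 2 * I + N := by
    have e : w - z = (xb - z) + (w - xb) := by abel
    rw [e, @norm_add_sq_real]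
  rw [h1, hexp2]
  have : (‖xb - z‖ ^ 2 + 2 * I + N) / (2 * μ)
      = ‖xb - z‖ ^ 2 / (2 * μ) + 2 * I / (2 * μ) + N / (2 * μ) := by ring
  rw [this]
  linarith

/-- Gradient (convexity) inequality for the Moreau envelope of a convex function. -/
lemma Mg_grad {n : ℕ} (g : En n → ℝ) (hg : ConvexOn ℝ Set.univ g) (μ : ℝ) (hμ : 0 < μ)
    (Mg : En n → ℝ) (xg : En n → En n) (hgprox : IsMoreauR g μ Mg xg) (z z' : En n) :
    Mg z + ⟪z - xg z, z' - z⟫ / μ ≤ Mg z' := by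
  set x' := xg z' with hx'
  set xb := xg z with hxb
  have tp := threepoint_g g hg μ hμ z xb (Mg z) (hgprox z).1 (hgprox z).2.1 x'
  have heq : Mg z' = g x' + ‖x' - z'‖ ^ 2 / (2 * μ) := (hgprox z').1
  have hCS : ⟪x' - xb, z' - z⟫ ≤ (‖x' - xb‖ ^ 2 + ‖z' - z‖ ^ 2) / 2 := by
    have h1 : ⟪x' - xb, z' - z⟫ ≤ ‖x' - xb‖ * ‖z' - z‖ := real_inner_le_norm _ _
    nlinarith [sq_nonneg (‖x' - xb‖ - ‖z' - z‖)]
  have hsplit : ⟪z - xb, z' - z⟫ = ⟪z - x', z' - z⟫ + ⟪x' - xb, z' - z⟫ := by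
    rw [← inner_add_left]; congr 1; abel
  have hexp : ‖x' - z'‖ ^ 2 = ‖x' - z‖ ^ 2 - 2 * ⟪x' - z, z' - z⟫ + ‖z' - z‖ ^ 2 := by
    have e : x' - z' = (x' - z) - (z' - z) := by abel
    rw [e, @norm_sub_sq_real]
  have hzz : ⟪z - x', z' - z⟫ = -⟪x' - z, z' - z⟫ := by
    rw [← inner_neg_left]; congr 1; abel
  have key : ⟪z - xb, z' - z⟫ / μ
      ≤ (‖x' - z'‖ ^ 2 - ‖x' - z‖ ^ 2 + ‖x' - xb‖ ^ 2) / (2 * μ) := by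
    rw [div_le_div_iff₀ hμ (by positivity)]
    nlinarith [hCS]
  have expand : (‖x' - z'‖ ^ 2 - ‖x' - z‖ ^ 2 + ‖x' - xb‖ ^ 2) / (2 * μ)
      = ‖x' - z'‖ ^ 2 / (2 * μ) - ‖x' - z‖ ^ 2 / (2 * μ) + ‖x' - xb‖ ^ 2 / (2 * μ) := by ring
  rw [heq]
  linarith [tp, expand ▸ key]

/-- Three-point inequality for the inexact proximal step involving `h`. -/
lemma threepoint_h {n : ℕ} (h : En n → EReal) (hconv : ConvexE h) (hbot : ∀ x, h x ≠ ⊥)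
    (μ : ℝ) (hμ : 0 < μ) (ξ z xp w : En n) (s r : ℝ) (hs : h xp = (s : ℝ))
    (hr : h w = (r : ℝ))
    (hmin : ∀ v, ((⟪ξ, xp⟫ + ‖xp - z‖ ^ 2 / (2 * μ) : ℝ) : EReal) + h xp ≤
      ((⟪ξ, v⟫ + ‖v - z‖ ^ 2 / (2 * μ) : ℝ) : EReal) + h v) :
    s + ⟪ξ, xp⟫ + ‖xp - z‖ ^ 2 / (2 * μ) + ‖w - xp‖ ^ 2 / (2 * μ) ≤
      r + ⟪ξ, w⟫ + ‖w - z‖ ^ 2 / (2 * μ) := by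
  set I : ℝ := ⟪xp - z, w - xp⟫ with hI
  set N : ℝ := ‖w - xp‖ ^ 2 with hN
  have key : s + ⟪ξ, xp⟫ ≤ r + ⟪ξ, w⟫ + 2 * I / (2 * μ) := by
    apply le_of_small' (C := N / (2 * μ)) (by positivity)
    intro t ht0 ht1
    set wt := (1 - t) • xp + t • w with hwt
    have hcvx : h wt ≤ (((1 - t) * s + t * r : ℝ) : EReal) := by
      have := hconv xp w (1 - t) t (by linarith) (le_of_lt ht0) (by ring)
      rw [hs, hr] at this
      rw [hwt]
      refine le_trans this (le_of_eq ?_)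
      push_cast
      rfl
    have hne_top : h wt ≠ ⊤ := by
      intro htop
      rw [htop, top_le_iff] at hcvx
      exact EReal.coe_ne_top _ hcvx
    set c : ℝ := (h wt).toReal with hc
    have hwtval : h wt = (c : EReal) := (EReal.coe_toReal hne_top (hbot wt)).symm
    have hmin' := hmin wt
    rw [hs, hwtval] at hmin'
    have hmR : (⟪ξ, xp⟫ + ‖xp - z‖ ^ 2 / (2 * μ)) + s ≤
        (⟪ξ, wt⟫ + ‖wt - z‖ ^ 2 / (2 * μ)) + c := by
      exact_mod_cast hmin'
    have hcR : c ≤ (1 - t) * s + t * r := by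
      rw [hwtval] at hcvx; exact_mod_cast hcvx
    have hinner : ⟪ξ, wt⟫ = (1 - t) * ⟪ξ, xp⟫ + t * ⟪ξ, w⟫ := by
      rw [hwt, inner_add_right, real_inner_smul_right, real_inner_smul_right]
    have hexp : ‖wt - z‖ ^ 2 = ‖xp - z‖ ^ 2 + 2 * t * I + t ^ 2 * N := by
      have e : wt - z = (xp - z) + t • (w - xp) := by
        rw [hwt, sub_smul, one_smul, smul_sub]; abel
      rw [e, @norm_add_sq_real, real_inner_smul_right, norm_smul]
      simp [abs_of_nonneg (le_of_lt ht0), hI, hN]; ring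
    rw [hinner, hexp] at hmR
    have expand : (‖xp - z‖ ^ 2 + 2 * t * I + t ^ 2 * N) / (2 * μ)
        = ‖xp - z‖ ^ 2 / (2 * μ) + t * (2 * I / (2 * μ)) + t * (t * (N / (2 * μ))) := by ring
    rw [expand] at hmR
    have step : t * (s + ⟪ξ, xp⟫) ≤
        t * (r + ⟪ξ, w⟫ + 2 * I / (2 * μ) + t * (N / (2 * μ))) := by nlinarith [hmR, hcR]
    have := (mul_le_mul_iff_right₀ ht0).mp step
    linarith
  have hexp2 : ‖w - z‖ ^ 2 = ‖xp - z‖ ^ 2 + 2 * I + N := by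
    have e : w - z = (xp - z) + (w - xp) := by abel
    rw [e, @norm_add_sq_real]
  rw [hexp2]
  have expand : (‖xp - z‖ ^ 2 + 2 * I + N) / (2 * μ)
      = ‖xp - z‖ ^ 2 / (2 * μ) + 2 * I / (2 * μ) + N / (2 * μ) := by ring
  rw [expand]
  linarith

/-- descent property of the potential `ℱ` along the inexact gradient
descent iterates on `F_μ` (Algorithm 1). -/
theorem stmt15 {n : ℕ} (f : En n → ℝ) (f' : En n → En n) (Lf : ℝ) (hLf : 0 < Lf)
    (hfdiff : ∀ x, HasGradientAt f (f' x) x)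
    (hfLip : ∀ x y : En n, ‖f' x - f' y‖ ≤ Lf * ‖x - y‖)
    (h : En n → EReal) (hhproper : ProperE h) (hhlsc : LowerSemicontinuous h)
    (hhconv : ConvexE h)
    (g : En n → ℝ) (hg : ConvexOn ℝ Set.univ g)
    (μ β : ℝ) (hμ0 : 0 < μ) (hμ1 : μ < 1 / Lf) (hβ0 : 0 < β) (hβ2 : β < 2)
    (Fstar : ℝ)
    (hmin : ∃ xs : En n, ((f xs : ℝ) : EReal) + h xs - ((g xs : ℝ) : EReal) = (Fstar : EReal) ∧
      ∀ x, (Fstar : EReal) ≤ ((f x : ℝ) : EReal) + h x - ((g x : ℝ) : EReal))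
    (Mφ : En n → ℝ) (xφ : En n → En n)
    (hφprox : IsMoreau (fun w => ((f w : ℝ) : EReal) + h w) μ Mφ xφ)
    (Mg : En n → ℝ) (xg : En n → En n) (hgprox : IsMoreauR g μ Mg xg)
    (x z : ℕ → En n)
    (hx : ∀ k : ℕ, ∀ w : En n,
      ((⟪f' (x k), x (k + 1)⟫ + ‖x (k + 1) - z k‖ ^ 2 / (2 * μ) : ℝ) : EReal) + h (x (k + 1)) ≤
        ((⟪f' (x k), w⟫ + ‖w - z k‖ ^ 2 / (2 * μ) : ℝ) : EReal) + h w)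
    (hz : ∀ k : ℕ, z (k + 1) = z k + β • (x (k + 1) - xg (z k))) :
    ∀ k : ℕ,
      (Fstar : EReal) ≤ ((Mφ (z k) - Mg (z k) : ℝ) : EReal) ∧
      ((Mφ (z k) - Mg (z k) : ℝ) : EReal) ≤ potF f h Mg μ (x k) (z k) ∧
      potF f h Mg μ (x (k + 1)) (z (k + 1)) +
          (((μ⁻¹ - Lf) / 2 * ‖x (k + 1) - x k‖ ^ 2 +
            (1 / β - 1 / 2) / μ * ‖z (k + 1) - z k‖ ^ 2 : ℝ) : EReal) ≤
        potF f h Mg μ (x k) (z k) := by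
  intro k
  obtain ⟨hφ1, hφ2, _⟩ := hφprox (z k)
  obtain ⟨hg1, hg2, _⟩ := hgprox (z k)
  beta_reduce at hφ1 hφ2
  -- h is real at xφ (z k)
  have hxbtop : h (xφ (z k)) ≠ ⊤ := by
    intro htop
    rw [htop] at hφ1
    simp at hφ1
  set r1 : ℝ := (h (xφ (z k))).toReal with hr1
  have hxbval : h (xφ (z k)) = (r1 : EReal) :=
    (EReal.coe_toReal hxbtop (hhproper.2 _)).symm
  rw [hxbval] at hφ1
  have hφ1R : Mφ (z k) = f (xφ (z k)) + r1 + ‖xφ (z k) - z k‖ ^ 2 / (2 * μ) := by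
    exact_mod_cast hφ1
  refine ⟨?_, ?_, ?_⟩
  · -- Fstar ≤ Mφ - Mg
    obtain ⟨xs, _, hFs⟩ := hmin
    have h1 := hFs (xφ (z k))
    rw [hxbval] at h1
    have h1R : Fstar ≤ f (xφ (z k)) + r1 - g (xφ (z k)) := by exact_mod_cast h1
    have h2 := hg2 (xφ (z k))
    have : Fstar ≤ Mφ (z k) - Mg (z k) := by linarith [hφ1R]
    exact_mod_cast this
  · -- Mφ - Mg ≤ potF (x k) (z k)
    rcases eq_or_ne (h (x k)) ⊤ with htop | hne
    · have e : potF f h Mg μ (x k) (z k) = ⊤ := by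
        rw [potF, htop]; exact EReal.top_add_coe _
      rw [e]; exact le_top
    · set r : ℝ := (h (x k)).toReal with hrr
      have hrval : h (x k) = (r : EReal) := (EReal.coe_toReal hne (hhproper.2 _)).symm
      have h2 := hφ2 (x k)
      rw [hrval] at h2
      have h2R : Mφ (z k) ≤ f (x k) + r + ‖x k - z k‖ ^ 2 / (2 * μ) := by exact_mod_cast h2
      rw [potF, hrval]
      have : Mφ (z k) - Mg (z k) ≤
          r + (f (x k) + ‖x k - z k‖ ^ 2 / (2 * μ) - Mg (z k)) := by linarith
      exact_mod_cast this
  · -- descent inequality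
    rcases eq_or_ne (h (x k)) ⊤ with htop | hne
    · have e : potF f h Mg μ (x k) (z k) = ⊤ := by
        rw [potF, htop]; exact EReal.top_add_coe _
      rw [e]; exact le_top
    · set r : ℝ := (h (x k)).toReal with hrr
      have hrval : h (x k) = (r : EReal) := (EReal.coe_toReal hne (hhproper.2 _)).symm
      -- h (x (k+1)) is real
      have hstop : h (x (k + 1)) ≠ ⊤ := by
        intro htop
        have := hx k (x k)
        rw [htop, hrval, EReal.coe_add_top, top_le_iff] at this
        norm_cast at this
        exact EReal.coe_ne_top _ this
      set s : ℝ := (h (x (k + 1))).toReal with hss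
      have hsval : h (x (k + 1)) = (s : EReal) := (EReal.coe_toReal hstop (hhproper.2 _)).symm
      -- Key real ingredients
      have hdesc := descent_lemma' f f' Lf hfdiff hfLip (x k) (x (k + 1))
      have htp := threepoint_h h hhconv hhproper.2 μ hμ0 (f' (x k)) (z k)
        (x (k + 1)) (x k) s r hsval hrval (hx k)
      have hgr := Mg_grad g hg μ hμ0 Mg xg hgprox (z k) (z (k + 1))
      -- notation
      set d : En n := x (k + 1) - xg (z k) with hd
      have e1 : z (k + 1) - z k = β • d := by rw [hz k, ← hd]; abel
      have hZ : ‖z (k + 1) - z k‖ ^ 2 = β ^ 2 * ‖d‖ ^ 2 := by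
        rw [e1, norm_smul]
        simp [abs_of_pos hβ0]; ring
      have hin1 : ⟪z k - xg (z k), z (k + 1) - z k⟫ = β * ⟪z k - xg (z k), d⟫ := by
        rw [e1, real_inner_smul_right]
      have hx2 : ‖x (k + 1) - z (k + 1)‖ ^ 2
          = ‖x (k + 1) - z k‖ ^ 2 - 2 * (β * ⟪x (k + 1) - z k, d⟫) + β ^ 2 * ‖d‖ ^ 2 := by
        have e : x (k + 1) - z (k + 1) = (x (k + 1) - z k) - β • d := by
          rw [hz k, ← hd]; abel
        rw [e, @norm_sub_sq_real, real_inner_smul_right, norm_smul]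
        simp [abs_of_pos hβ0]; ring
      have hsum : ⟪x (k + 1) - z k, d⟫ + ⟪z k - xg (z k), d⟫ = ‖d‖ ^ 2 := by
        rw [← inner_add_left, show (x (k + 1) - z k) + (z k - xg (z k)) = d by rw [hd]; abel]
        exact real_inner_self_eq_norm_sq d
      -- abbreviations for linarith
      set a : ℝ := ⟪x (k + 1) - z k, d⟫ with ha
      set b : ℝ := ⟪z k - xg (z k), d⟫ with hb
      set D : ℝ := ‖d‖ ^ 2 with hD
      set N : ℝ := ‖x (k + 1) - x k‖ ^ 2 with hNN
      have hNrev : ‖x k - x (k + 1)‖ ^ 2 = N := by rw [hNN, norm_sub_rev]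
      have hinnersub : ⟪f' (x k), x (k + 1) - x k⟫ =
          ⟪f' (x k), x (k + 1)⟫ - ⟪f' (x k), x k⟫ := inner_sub_right _ _ _
      rw [hin1] at hgr
      rw [potF, potF, hrval, hsval]
      have realgoal : s + (f (x (k + 1)) + ‖x (k + 1) - z (k + 1)‖ ^ 2 / (2 * μ)
            - Mg (z (k + 1)))
          + ((μ⁻¹ - Lf) / 2 * N + (1 / β - 1 / 2) / μ * ‖z (k + 1) - z k‖ ^ 2)
          ≤ r + (f (x k) + ‖x k - z k‖ ^ 2 / (2 * μ) - Mg (z k)) := by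
        rw [hx2, hZ]
        have idc1 : (μ⁻¹ - Lf) / 2 * N = N / (2 * μ) - Lf / 2 * N := by
          field_simp
        have idc2 : (1 / β - 1 / 2) / μ * (β ^ 2 * D)
            = 2 * β * D / (2 * μ) - β ^ 2 * D / (2 * μ) := by
          field_simp
        have id3 : (‖x (k + 1) - z k‖ ^ 2 - 2 * (β * a) + β ^ 2 * D) / (2 * μ)
            = ‖x (k + 1) - z k‖ ^ 2 / (2 * μ) - 2 * β * a / (2 * μ) + β ^ 2 * D / (2 * μ) := by
          ring
        have id5 : 2 * β * D / (2 * μ) = 2 * β * a / (2 * μ) + 2 * β * b / (2 * μ) := by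
          rw [← hsum]; ring
        have id6 : β * b / μ = 2 * β * b / (2 * μ) := by ring
        have hNrev2 : ‖x k - x (k + 1)‖ ^ 2 / (2 * μ) = N / (2 * μ) := by rw [hNrev]
        linarith [hdesc, htp, hgr, idc1, idc2, id3, id5, id6, hNrev2, hinnersub]
      exact_mod_cast realgoal
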